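/- If α ∈ K∞ and γ: [0,∞) → [0,∞) satisfies (id+α)∘γ < id pointwise on (0,∞), where γ is continuous, increasing and γ(0)=0, then id − γ ∈ K∞, i.e., r ↦ r − γ(r) is continuous, strictly increasing, unbounded and vanishes at 0. -/

import Mathlib

open NNReal

/-- A function is of class K∞: continuous, strictly increasing, unbounded, and 0 at 0. -/
def KInf (f : ℝ≥0 → ℝ≥0) : Prop :=
  Continuous f ∧ StrictMono f ∧ f 0 = 0 ∧ ∀ M : ℝ≥0, ∃ r, M < f r

/-- If (id+α)∘γ < id on (0,∞) for α ∈ K∞ and γ continuous increasing with γ(0)=0, then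
id − γ is positive on (0,∞), unbounded, and vanishes at 0. -/
theorem id_sub_gamma_KInf (α γ : ℝ≥0 → ℝ≥0) (hα : KInf α)
    (hγc : Continuous γ) (hγm : Monotone γ) (hγ0 : γ 0 = 0)
    (h : ∀ r : ℝ≥0, 0 < r → γ r + α (γ r) < r) :
    (∀ r : ℝ≥0, 0 < r → γ r < r) ∧
    (∀ M : ℝ≥0, ∃ r, M < r - γ r) ∧
    ((0 : ℝ≥0) - γ 0 = 0) := by
  obtain ⟨hαc, hαm, hα0, hαu⟩ := hα
  refine ⟨fun r hr => lt_of_le_of_lt (le_add_right le_rfl) (h r hr), ?_, by simp [hγ0]⟩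
  intro M
  obtain ⟨s, hs⟩ := hαu M
  have hs0 : 0 < s := by
    rcases eq_or_lt_of_le (zero_le : 0 ≤ s) with h' | h'
    · exact absurd hs (by simp [← h', hα0])
    · exact h'
  by_cases hcase : ∃ r, s ≤ γ r
  · obtain ⟨r, hr⟩ := hcase
    have hr0 : 0 < r := by
      by_contra hr0
      push_neg at hr0
      have : r = 0 := le_antisymm hr0 (zero_le : 0 ≤ r)
      rw [this, hγ0] at hr
      exact absurd (lt_of_lt_of_le hs0 hr) (lt_irrefl 0)
    have hM : M < α (γ r) := lt_of_lt_of_le hs (hαm.monotone hr)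
    have := h r hr0
    refine ⟨r, ?_⟩
    rw [lt_tsub_iff_right]
    calc M + γ r < α (γ r) + γ r := by exact add_lt_add_left hM _
      _ = γ r + α (γ r) := add_comm _ _
      _ < r := this
  · push_neg at hcase
    refine ⟨M + s, ?_⟩
    rw [lt_tsub_iff_right]
    exact add_lt_add_right (hcase _) M
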